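/- Let G be a hyperbolic group with finite symmetric generating set S, word length |·|, and δ ≥ 1 a hyperbolicity constant for the Cayley graph. Then there is a constant A such that for every n ≥ 1, the number of distinct conjugacy classes of the form C^d, where d ≥ 1 ranges over integers and C over conjugacy classes with |C| < 16δ, that contain an element of word length at most n, is at most A·n. -/

import Mathlib

/-- The word length of `g` with respect to the generating set `S`. -/
noncomputable def wordLength {G : Type*} [Group G] (S : Set G) (g : G) : ℕ :=
  sInf {n | ∃ l : List G, (∀ x ∈ l, x ∈ S) ∧ l.prod = g ∧ l.length = n}

/-- `|C| = min {|x| : x ∈ C}`, the minimal word length in a conjugacy class `C`. -/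
noncomputable def minConjLength {G : Type*} [Group G] (S : Set G) (C : Set G) : ℕ :=
  sInf (wordLength S '' C)

/-- The Gromov product for the word metric on `G` with respect to `S`. -/
noncomputable def wordGromovProd {G : Type*} [Group G] (S : Set G) (x y z : G) : ℝ :=
  ((wordLength S (x⁻¹ * z) : ℝ) + (wordLength S (y⁻¹ * z) : ℝ) - (wordLength S (x⁻¹ * y) : ℝ)) / 2

/-- The word metric of `(G,S)` satisfies the four-point condition with constant `δ`. -/
def FourPointWith {G : Type*} [Group G] (S : Set G) (δ : ℝ) : Prop :=
  ∀ x y z w : G,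
    min (wordGromovProd S x z w) (wordGromovProd S y z w) ≤ wordGromovProd S x y w + δ

/-- `G` is Gromov-hyperbolic with respect to `S`: its word metric satisfies the four-point
condition for some `δ ≥ 0`. -/
def IsHyperbolicWith {G : Type*} [Group G] (S : Set G) : Prop :=
  ∃ δ : ℝ, 0 ≤ δ ∧ FourPointWith S δ

section Basics
variable {G : Type*} [Group G] {S : Set G}

lemma exists_word (hSgen : Subgroup.closure S = ⊤) (hSsymm : ∀ s ∈ S, s⁻¹ ∈ S) (g : G) :
    ∃ l : List G, (∀ x ∈ l, x ∈ S) ∧ l.prod = g := by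
  have hg : g ∈ Subgroup.closure S := by rw [hSgen]; trivial
  induction hg using Subgroup.closure_induction with
  | mem x hx => exact ⟨[x], by simpa using hx, by simp⟩
  | one => exact ⟨[], by simp, by simp⟩
  | mul x y _ _ hx hy =>
      obtain ⟨l1, h1, h1p⟩ := hx
      obtain ⟨l2, h2, h2p⟩ := hy
      refine ⟨l1 ++ l2, ?_, by simp [h1p, h2p]⟩
      intro a ha; rcases List.mem_append.1 ha with h|h
      exacts [h1 a h, h2 a h]
  | inv x _ hx =>
      obtain ⟨l, hl, hp⟩ := hx
      refine ⟨(l.map fun x => x⁻¹).reverse, ?_, ?_⟩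
      · intro a ha
        simp only [List.mem_reverse, List.mem_map] at ha
        obtain ⟨b, hb, rfl⟩ := ha
        exact hSsymm b (hl b hb)
      · rw [← List.prod_inv_reverse, hp]

lemma wordSet_nonempty (hSgen : Subgroup.closure S = ⊤)
    (hSsymm : ∀ s ∈ S, s⁻¹ ∈ S) (g : G) :
    {n | ∃ l : List G, (∀ x ∈ l, x ∈ S) ∧ l.prod = g ∧ l.length = n}.Nonempty := by
  obtain ⟨l, hl, hp⟩ := exists_word hSgen hSsymm g
  exact ⟨l.length, l, hl, hp, rfl⟩

lemma exists_min_word (hSgen : Subgroup.closure S = ⊤) (hSsymm : ∀ s ∈ S, s⁻¹ ∈ S) (g : G) :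
    ∃ l : List G, (∀ x ∈ l, x ∈ S) ∧ l.prod = g ∧ l.length = wordLength S g :=
  Nat.sInf_mem (wordSet_nonempty hSgen hSsymm g)

lemma wl_le_length {l : List G} (hl : ∀ x ∈ l, x ∈ S) : wordLength S l.prod ≤ l.length :=
  Nat.sInf_le ⟨l, hl, rfl, rfl⟩

lemma wl_one : wordLength S (1 : G) = 0 :=
  Nat.le_zero.1 (by simpa using wl_le_length (S := S) (l := []) (by simp))

lemma wl_mul (hSgen : Subgroup.closure S = ⊤) (hSsymm : ∀ s ∈ S, s⁻¹ ∈ S) (g h : G) :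
    wordLength S (g * h) ≤ wordLength S g + wordLength S h := by
  obtain ⟨l1, h1, h1p, h1l⟩ := exists_min_word hSgen hSsymm g
  obtain ⟨l2, h2, h2p, h2l⟩ := exists_min_word hSgen hSsymm h
  have := wl_le_length (S := S) (l := l1 ++ l2) (by
    intro a ha; rcases List.mem_append.1 ha with hh|hh; exacts [h1 a hh, h2 a hh])
  simpa [h1p, h2p, h1l, h2l] using this

lemma wl_inv_le (hSgen : Subgroup.closure S = ⊤) (hSsymm : ∀ s ∈ S, s⁻¹ ∈ S) (g : G) :
    wordLength S g⁻¹ ≤ wordLength S g := by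
  obtain ⟨l, hl, hp, hlen⟩ := exists_min_word hSgen hSsymm g
  have hmem : ∀ x ∈ (l.map fun x => x⁻¹).reverse, x ∈ S := by
    intro a ha
    simp only [List.mem_reverse, List.mem_map] at ha
    obtain ⟨b, hb, rfl⟩ := ha
    exact hSsymm b (hl b hb)
  have := wl_le_length (S := S) hmem
  rw [← List.prod_inv_reverse, hp] at this
  simpa [hlen] using this

lemma wl_inv (hSgen : Subgroup.closure S = ⊤) (hSsymm : ∀ s ∈ S, s⁻¹ ∈ S) (g : G) :
    wordLength S g⁻¹ = wordLength S g :=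
  le_antisymm (wl_inv_le hSgen hSsymm g)
    (by simpa using wl_inv_le hSgen hSsymm g⁻¹)

end Basics

section More
variable {G : Type*} [Group G] {S : Set G}
variable (hSgen : Subgroup.closure S = ⊤) (hSsymm : ∀ s ∈ S, s⁻¹ ∈ S)
include hSgen hSsymm

lemma wl_pow (g : G) (m : ℕ) : wordLength S (g ^ m) ≤ m * wordLength S g := by
  induction m with
  | zero => simp [wl_one]
  | succ k ih =>
      have := wl_mul hSgen hSsymm (g ^ k) g
      rw [← pow_succ] at this
      calc wordLength S (g ^ (k+1)) ≤ wordLength S (g ^ k) + wordLength S g := this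
        _ ≤ k * wordLength S g + wordLength S g := by omega
        _ = (k+1) * wordLength S g := by ring

lemma wl_conj_le (u g : G) :
    wordLength S (u * g * u⁻¹) ≤ wordLength S g + 2 * wordLength S u := by
  have h1 := wl_mul hSgen hSsymm (u * g) u⁻¹
  have h2 := wl_mul hSgen hSsymm u g
  have h3 := wl_inv hSgen hSsymm u
  omega

lemma ball_finite (hSfin : S.Finite) (R : ℕ) :
    {g : G | wordLength S g ≤ R}.Finite := by
  have : Finite S := hSfin.to_subtype
  have hfin : ({l : List S | l.length ≤ R}.Finite) := List.finite_length_le S R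
  have himg : {g : G | wordLength S g ≤ R} ⊆
      (fun l : List S => (l.map Subtype.val).prod) '' {l : List S | l.length ≤ R} := by
    intro g hg
    obtain ⟨l, hl, hp, hlen⟩ := exists_min_word hSgen hSsymm g
    refine ⟨l.pmap (fun x hx => (⟨x, hx⟩ : S)) hl, by simpa [List.length_pmap, hlen] using hg, ?_⟩
    simp only [List.map_pmap]
    rw [List.pmap_eq_map]  -- might not directly apply
    · simpa using hp
  exact (hfin.image _).subset himg

end More

section Hyp
variable {G : Type*} [Group G] {S : Set G}
variable (hSgen : Subgroup.closure S = ⊤) (hSsymm : ∀ s ∈ S, s⁻¹ ∈ S)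
include hSgen hSsymm

lemma gp_comm (x y w : G) : wordGromovProd S x y w = wordGromovProd S y x w := by
  have e : (x⁻¹ * y)⁻¹ = y⁻¹ * x := by group
  unfold wordGromovProd
  rw [show wordLength S (y⁻¹ * x) = wordLength S (x⁻¹ * y) by rw [← e, wl_inv hSgen hSsymm]]
  ring

lemma gp_nonneg (x y w : G) : 0 ≤ wordGromovProd S x y w := by
  have h := wl_mul hSgen hSsymm (x⁻¹ * w) (w⁻¹ * y)
  have e : x⁻¹ * w * (w⁻¹ * y) = x⁻¹ * y := by group
  rw [e] at h
  have hw : wordLength S (y⁻¹ * w) = wordLength S (w⁻¹ * y) := by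
    rw [← wl_inv hSgen hSsymm (y⁻¹ * w)]
    congr 1; group
  unfold wordGromovProd
  rw [hw]
  have := (Nat.cast_le (α := ℝ)).2 h
  push_cast at this ⊢
  linarith

/-- Chain / broken-geodesic lemma: if `|g²| ≥ |g| + 2δ + 1` then `|gᵐ| ≥ m`. -/
lemma chain_growth (δ : ℝ) (hδ : 0 ≤ δ) (hhyp : FourPointWith S δ) (g : G)
    (h2 : (wordLength S g : ℝ) + 2 * δ + 1 ≤ (wordLength S (g * g) : ℝ)) :
    ∀ m : ℕ, 1 ≤ m → (m : ℝ) ≤ (wordLength S (g ^ m) : ℝ) := by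
  obtain ⟨L, hL⟩ : ∃ L : ℝ, L = (wordLength S g : ℝ) := ⟨_, rfl⟩
  obtain ⟨W, hW⟩ : ∃ W : ℝ, W = (wordLength S (g * g) : ℝ) := ⟨_, rfl⟩
  obtain ⟨c', hc'⟩ : ∃ c' : ℝ, c' = max (L - W / 2) 0 := ⟨_, rfl⟩
  rw [← hL, ← hW] at h2
  have hcge : L - W / 2 ≤ c' := by rw [hc']; exact le_max_left _ _
  have hc0 : 0 ≤ c' := by rw [hc']; exact le_max_right _ _
  have hgg2 : W ≤ 2 * L := by
    have h := wl_mul hSgen hSsymm g g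
    have h' := (Nat.cast_le (α := ℝ)).2 h
    push_cast at h'; rw [hL, hW]; linarith
  have hLc : 2 * c' + 2 * δ + 1 ≤ L := by
    rw [hc']
    rcases max_cases (L - W / 2) 0 with ⟨h, _⟩ | ⟨h, _⟩ <;> rw [h] <;> linarith
  have prod_eq : ∀ m : ℕ, wordGromovProd S 1 (g ^ (m+1)) (g ^ m)
      = ((wordLength S (g ^ m) : ℝ) + L - (wordLength S (g ^ (m+1)) : ℝ)) / 2 := by
    intro m
    have e1 : (1 : G)⁻¹ * g ^ m = g ^ m := by group
    have e2 : (g ^ (m+1))⁻¹ * g ^ m = g⁻¹ := by rw [pow_succ]; group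
    have e3 : (1 : G)⁻¹ * g ^ (m+1) = g ^ (m+1) := by group
    unfold wordGromovProd
    rw [e1, e2, e3, wl_inv hSgen hSsymm, hL]
  have prod_eq' : ∀ m : ℕ, wordGromovProd S 1 (g ^ m) (g ^ (m+1))
      = ((wordLength S (g ^ (m+1)) : ℝ) + L - (wordLength S (g ^ m) : ℝ)) / 2 := by
    intro m
    have e1 : (1 : G)⁻¹ * g ^ (m+1) = g ^ (m+1) := by group
    have e2 : (g ^ m)⁻¹ * g ^ (m+1) = g := by rw [pow_succ]; group
    have e3 : (1 : G)⁻¹ * g ^ m = g ^ m := by group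
    unfold wordGromovProd
    rw [e1, e2, e3, hL]
  have corner : ∀ m : ℕ, wordGromovProd S (g ^ m) (g ^ (m+2)) (g ^ (m+1)) = L - W / 2 := by
    intro m
    have e1 : (g ^ m)⁻¹ * g ^ (m+1) = g := by rw [pow_succ]; group
    have e2 : (g ^ (m+2))⁻¹ * g ^ (m+1) = g⁻¹ := by
      rw [show m + 2 = m + 1 + 1 by ring, pow_succ]; group
    have e3 : (g ^ m)⁻¹ * g ^ (m+2) = g * g := by
      rw [show m + 2 = m + 1 + 1 by ring, pow_succ, pow_succ, mul_assoc,
        inv_mul_cancel_left]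
    unfold wordGromovProd
    rw [e1, e2, e3, wl_inv hSgen hSsymm, hL, hW]
    ring
  have key : ∀ m : ℕ, 1 ≤ m →
      wordGromovProd S 1 (g ^ (m+1)) (g ^ m) ≤ c' + δ ∧ (m : ℝ) ≤ (wordLength S (g ^ m) : ℝ) := by
    intro m hm
    induction m with
    | zero => omega
    | succ k ih =>
        rcases Nat.eq_or_lt_of_le hm with h1 | h1
        · have hk : k = 0 := by omega
          subst hk
          constructor
          · have h0 := corner 0
            simp only [pow_zero, show (0:ℕ)+1+1 = 0+2 from rfl] at h0 ⊢
            rw [h0]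
            linarith
          · simp only [zero_add, pow_one]
            have hL1 : (1:ℝ) ≤ L := by linarith
            rw [← hL]; exact_mod_cast hL1
        · have hk : 1 ≤ k := by omega
          obtain ⟨ihp, ihl⟩ := ih hk
          have h4 := hhyp (g ^ k) (g ^ (k+2)) 1 (g ^ (k+1))
          rw [corner k] at h4
          have hlow : c' + δ < wordGromovProd S (g ^ k) 1 (g ^ (k+1)) := by
            rw [gp_comm hSgen hSsymm, prod_eq' k]
            rw [prod_eq k] at ihp
            linarith
          have hup : wordGromovProd S (g ^ (k+2)) 1 (g ^ (k+1)) ≤ c' + δ := by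
            rcases min_le_iff.1 h4 with h | h
            · linarith
            · linarith
          rw [gp_comm hSgen hSsymm] at hup
          have hup' : wordGromovProd S 1 (g ^ (k+1+1)) (g ^ (k+1)) ≤ c' + δ := by
            rw [show k+1+1 = k+2 by ring]; exact hup
          refine ⟨hup', ?_⟩
          rw [prod_eq (k+1)] at hup'
          rw [prod_eq k] at ihp
          push_cast
          push_cast at ihl
          linarith
  intro m hm
  exact (key m hm).2

/-- A shortest element of its conjugacy class which is longer than `6δ+2` satisfies
`|g²| ≥ |g| + 2δ + 1`. -/
lemma min_doubles (δ : ℝ) (hδ : 0 ≤ δ) (hhyp : FourPointWith S δ) (g : G)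
    (hmin : ∀ u : G, wordLength S g ≤ wordLength S (u * g * u⁻¹))
    (hbig : 6 * δ + 2 < (wordLength S g : ℝ)) :
    (wordLength S g : ℝ) + 2 * δ + 1 ≤ (wordLength S (g * g) : ℝ) := by
  by_contra hlt
  push_neg at hlt
  obtain ⟨l, hl, hp, hlen⟩ := exists_min_word hSgen hSsymm g
  obtain ⟨k, hk⟩ : ∃ k : ℕ, k = wordLength S g / 2 := ⟨_, rfl⟩
  have hkN : k ≤ wordLength S g := by omega
  obtain ⟨p, hpdef⟩ : ∃ p : G, p = (l.take k).prod := ⟨_, rfl⟩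
  obtain ⟨q, hqdef⟩ : ∃ q : G, q = (l.drop k).prod := ⟨_, rfl⟩
  have hpq : p * q = g := by rw [hpdef, hqdef, ← List.prod_append, List.take_append_drop, hp]
  have hpa : wordLength S p ≤ k := by
    have := wl_le_length (S := S) (l := l.take k) (fun x hx => hl x (List.mem_of_mem_take hx))
    rw [← hpdef] at this
    calc wordLength S p ≤ (l.take k).length := this
      _ ≤ k := by rw [List.length_take]; omega
  have hqa : wordLength S q ≤ wordLength S g - k := by
    have := wl_le_length (S := S) (l := l.drop k) (fun x hx => hl x (List.mem_of_mem_drop hx))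
    rw [← hqdef] at this
    calc wordLength S q ≤ (l.drop k).length := this
      _ = wordLength S g - k := by rw [List.length_drop, hlen]
  have htri : wordLength S g ≤ wordLength S p + wordLength S q := by
    have := wl_mul hSgen hSsymm p q
    rw [hpq] at this; exact this
  have hpk : wordLength S p = k := by omega
  have hqk : wordLength S q = wordLength S g - k := by omega
  -- real versions
  obtain ⟨N, hN⟩ : ∃ N : ℝ, N = (wordLength S g : ℝ) := ⟨_, rfl⟩
  obtain ⟨W, hW⟩ : ∃ W : ℝ, W = (wordLength S (g * g) : ℝ) := ⟨_, rfl⟩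
  obtain ⟨K, hK⟩ : ∃ K : ℝ, K = (k : ℝ) := ⟨_, rfl⟩
  obtain ⟨Q, hQ⟩ : ∃ Q : ℝ, Q = (wordLength S q : ℝ) := ⟨_, rfl⟩
  have hQNK : Q = N - K := by
    rw [hQ, hqk, hN, hK]
    have : (wordLength S g - k : ℕ) = wordLength S g - k := rfl
    push_cast [hkN]
    ring
  have hkk : 2 * K ≤ N ∧ N ≤ 2 * K + 1 := by
    constructor <;> rw [hK, hN] <;> exact_mod_cast (by omega : _)
  -- length facts
  have einv : wordLength S p⁻¹ = k := by rw [wl_inv hSgen hSsymm, hpk]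
  have eginv : wordLength S g⁻¹ = wordLength S g := wl_inv hSgen hSsymm g
  have egp : wordLength S (g⁻¹ * p) = wordLength S q := by
    rw [← wl_inv hSgen hSsymm (g⁻¹ * p), show (g⁻¹ * p)⁻¹ = p⁻¹ * g by group,
      show p⁻¹ * g = q by rw [← hpq]; group]
  -- Gromov products
  have A1 : wordGromovProd S p 1 g = (Q + N - K) / 2 := by
    unfold wordGromovProd
    rw [show p⁻¹ * g = q by rw [← hpq]; group, show (1:G)⁻¹ * g = g by group,
      show p⁻¹ * (1:G) = p⁻¹ by group, einv, hQ, hN, hK]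
  have A3 : wordGromovProd S 1 (g * g) g = (N + N - W) / 2 := by
    unfold wordGromovProd
    rw [show (1:G)⁻¹ * g = g by group, show (g * g)⁻¹ * g = g⁻¹ by group,
      show (1:G)⁻¹ * (g * g) = g * g by group, eginv, hN, hW]
  have A4 : wordGromovProd S (g * p) (g * g) g = (K + N - Q) / 2 := by
    unfold wordGromovProd
    rw [show (g * p)⁻¹ * g = p⁻¹ by group, show (g * g)⁻¹ * g = g⁻¹ by group,
      show (g * p)⁻¹ * (g * g) = p⁻¹ * g by group,
      show p⁻¹ * g = q by rw [← hpq]; group, einv, eginv, hN, hK, hQ]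
  have A5 : wordGromovProd S p (g * p) g
      = (Q + K - (wordLength S (q * p) : ℝ)) / 2 := by
    unfold wordGromovProd
    rw [show p⁻¹ * (g * p) = q * p by rw [← hpq]; group,
      show p⁻¹ * g = q by rw [← hpq]; group, show (g * p)⁻¹ * g = p⁻¹ by group,
      einv, hQ, hK]
  have hminp : N ≤ (wordLength S (q * p) : ℝ) := by
    have h := hmin p⁻¹
    rw [inv_inv] at h
    rw [show p⁻¹ * g * p = q * p by rw [← hpq]; group] at h
    rw [hN]; exact_mod_cast h
  have h5 := hhyp 1 (g * p) (g * g) g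
  have h6 := hhyp p (g * p) 1 g
  rw [A3, A4] at h5
  rw [A1, gp_comm hSgen hSsymm (g*p) 1 g, A5] at h6
  rw [← hN, ← hW] at hlt
  rw [← hN] at hbig
  rcases min_le_iff.1 h5 with h | h <;> rcases min_le_iff.1 h6 with h' | h' <;> linarith

omit hSgen hSsymm in
lemma exists_min_rep (x : G) :
    ∃ g : G, IsConj x g ∧ wordLength S g = minConjLength S {y | IsConj x y} ∧
      ∀ u : G, wordLength S g ≤ wordLength S (u * g * u⁻¹) := by
  have hne : (wordLength S '' {y | IsConj x y}).Nonempty := ⟨_, ⟨x, IsConj.refl x, rfl⟩⟩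
  obtain ⟨g, hg, hgl⟩ := Nat.sInf_mem hne
  refine ⟨g, hg, hgl, fun u => ?_⟩
  rw [hgl]
  exact Nat.sInf_le ⟨u * g * u⁻¹, hg.trans (isConj_iff.2 ⟨u, rfl⟩), rfl⟩

omit hSgen hSsymm in
lemma class_eq_of_isConj {a b : G} (h : IsConj a b) :
    {y : G | IsConj a y} = {y : G | IsConj b y} := by
  ext y; exact ⟨fun hy => h.symm.trans hy, fun hy => h.trans hy⟩

omit hSgen hSsymm in
lemma isConj_pow {a b : G} (h : IsConj a b) (d : ℕ) : IsConj (a ^ d) (b ^ d) := by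
  obtain ⟨c, hc⟩ := isConj_iff.1 h
  refine isConj_iff.2 ⟨c, ?_⟩
  rw [← hc]
  have : c * a * c⁻¹ = (MulAut.conj c) a := rfl
  rw [this, ← map_pow]
  rfl

/-- The per-`x` counting lemma. -/
lemma per_x (hSfin : S.Finite) (δ : ℝ) (hδ : 1 ≤ δ) (hhyp : FourPointWith S δ) (x : G) :
    ∃ C : ℕ, ∀ n : ℕ, 1 ≤ n →
      {D : Set G | ∃ d : ℕ, 1 ≤ d ∧ D = {y | IsConj (x ^ d) y} ∧
        ∃ z ∈ D, wordLength S z ≤ n}.Finite ∧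
      {D : Set G | ∃ d : ℕ, 1 ≤ d ∧ D = {y | IsConj (x ^ d) y} ∧
        ∃ z ∈ D, wordLength S z ≤ n}.ncard ≤ C * n := by
  have hδ0 : (0:ℝ) ≤ δ := by linarith
  classical
  by_cases hcase : ∃ d₀ : ℕ, 1 ≤ d₀ ∧ ∃ g : G, IsConj (x ^ d₀) g ∧
      (∀ u : G, wordLength S g ≤ wordLength S (u * g * u⁻¹)) ∧ 6 * δ + 2 < (wordLength S g : ℝ)
  · obtain ⟨d₀, hd₀, g, hgconj, hgmin, hgbig⟩ := hcase
    have h2 := min_doubles hSgen hSsymm δ hδ0 hhyp g hgmin hgbig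
    have growth := chain_growth hSgen hSsymm δ hδ0 hhyp g h2
    refine ⟨d₀, fun n hn => ?_⟩
    -- every admissible d is at most d₀ * n
    have key : ∀ d : ℕ, 1 ≤ d → ∀ z : G, IsConj (x ^ d) z → wordLength S z ≤ n →
        d ≤ d₀ * n := by
      intro d hd z hz hzn
      obtain ⟨w, hw⟩ := isConj_iff.1 hgconj
      obtain ⟨u, hu⟩ := isConj_iff.1 hz
      obtain ⟨E, hE⟩ : ∃ E : ℕ, E = wordLength S (w * u⁻¹) := ⟨_, rfl⟩
      have hkey : ∀ m : ℕ, 1 ≤ m → d * m ≤ d₀ * m * wordLength S z + 2 * E := by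
        intro m hm
        have hgid : g ^ (d * m) = (w * u⁻¹) * z ^ (d₀ * m) * (w * u⁻¹)⁻¹ := by
          rw [← hw, ← hu]
          have e1 : (w * x ^ d₀ * w⁻¹) ^ (d * m) = w * x ^ (d₀ * (d * m)) * w⁻¹ := by
            rw [show w * x ^ d₀ * w⁻¹ = (MulAut.conj w) (x ^ d₀) from rfl, ← map_pow,
              ← pow_mul]
            rfl
          have e2 : (u * x ^ d * u⁻¹) ^ (d₀ * m) = u * x ^ (d * (d₀ * m)) * u⁻¹ := by
            rw [show u * x ^ d * u⁻¹ = (MulAut.conj u) (x ^ d) from rfl, ← map_pow,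
              ← pow_mul]
            rfl
          rw [e1, e2, show d₀ * (d * m) = d * (d₀ * m) by ring]
          group
        have hgl : wordLength S (g ^ (d * m))
            ≤ wordLength S (z ^ (d₀ * m)) + 2 * wordLength S (w * u⁻¹) := by
          rw [hgid]
          exact wl_conj_le hSgen hSsymm _ _
        have hzp : wordLength S (z ^ (d₀ * m)) ≤ d₀ * m * wordLength S z :=
          wl_pow hSgen hSsymm z _
        have hgrow : d * m ≤ wordLength S (g ^ (d * m)) := by
          have := growth (d * m) (Nat.one_le_iff_ne_zero.mpr (Nat.mul_ne_zero (by omega) (by omega)))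
          exact_mod_cast this
        omega
      by_contra hcon
      push_neg at hcon
      have hdz : d₀ * wordLength S z + 1 ≤ d := by
        have h := Nat.mul_le_mul_left d₀ hzn
        omega
      have hm := hkey (2 * E + 1) (by omega)
      have h1 : (d₀ * wordLength S z + 1) * (2 * E + 1) ≤ d * (2 * E + 1) :=
        Nat.mul_le_mul_right _ hdz
      obtain ⟨P, hP⟩ : ∃ P : ℕ, P = d₀ * wordLength S z * (2 * E + 1) := ⟨_, rfl⟩
      obtain ⟨Q2, hQ2⟩ : ∃ q : ℕ, q = d * (2 * E + 1) := ⟨_, rfl⟩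
      rw [show (d₀ * wordLength S z + 1) * (2 * E + 1) = d₀ * wordLength S z * (2*E+1) + (2*E+1) by ring,
        ← hP, ← hQ2] at h1
      rw [show d₀ * (2*E+1) * wordLength S z = d₀ * wordLength S z * (2*E+1) by ring, ← hP,
        ← hQ2] at hm
      omega
    have hsub : {D : Set G | ∃ d : ℕ, 1 ≤ d ∧ D = {y | IsConj (x ^ d) y} ∧
          ∃ z ∈ D, wordLength S z ≤ n}
        ⊆ (fun d : ℕ => {y : G | IsConj (x ^ d) y}) '' ↑(Finset.Icc 1 (d₀ * n)) := by
      rintro D ⟨d, hd, rfl, z, hzD, hzn⟩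
      exact ⟨d, by simp [Finset.mem_Icc, hd, key d hd z hzD hzn], rfl⟩
    have hfin : ((fun d : ℕ => {y : G | IsConj (x ^ d) y}) ''
        ↑(Finset.Icc 1 (d₀ * n))).Finite :=
      (Finset.Icc 1 (d₀ * n)).finite_toSet.image _
    refine ⟨hfin.subset hsub, ?_⟩
    calc {D : Set G | ∃ d : ℕ, 1 ≤ d ∧ D = {y | IsConj (x ^ d) y} ∧
          ∃ z ∈ D, wordLength S z ≤ n}.ncard
        ≤ ((fun d : ℕ => {y : G | IsConj (x ^ d) y}) '' ↑(Finset.Icc 1 (d₀ * n))).ncard :=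
          Set.ncard_le_ncard hsub hfin
      _ ≤ (↑(Finset.Icc 1 (d₀ * n)) : Set ℕ).ncard :=
          Set.ncard_image_le (Finset.Icc 1 (d₀ * n)).finite_toSet
      _ = (Finset.Icc 1 (d₀ * n)).card := Set.ncard_coe_finset _
      _ ≤ d₀ * n := by rw [Nat.card_Icc]; omega
  · push_neg at hcase
    obtain ⟨R, hR⟩ : ∃ R : ℕ, R = ⌊6 * δ + 2⌋₊ := ⟨_, rfl⟩
    have hBfin := ball_finite hSgen hSsymm hSfin (R := R)
    refine ⟨{g : G | wordLength S g ≤ R}.ncard, fun n hn => ?_⟩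
    have hrep : ∀ D ∈ {D : Set G | ∃ d : ℕ, 1 ≤ d ∧ D = {y | IsConj (x ^ d) y} ∧
        ∃ z ∈ D, wordLength S z ≤ n}, ∃ z, z ∈ D ∧ wordLength S z ≤ R := by
      rintro D ⟨d, hd, rfl, -⟩
      obtain ⟨g, hgconj, hglen, hgmin⟩ := exists_min_rep (S := S) (x ^ d)
      have hle : (wordLength S g : ℝ) ≤ 6 * δ + 2 := hcase d hd g hgconj hgmin
      exact ⟨g, hgconj, by rw [hR]; exact Nat.le_floor hle⟩
    obtain ⟨f, hf⟩ : ∃ f : Set G → G, ∀ D ∈ {D : Set G | ∃ d : ℕ, 1 ≤ d ∧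
        D = {y | IsConj (x ^ d) y} ∧ ∃ z ∈ D, wordLength S z ≤ n},
        f D ∈ D ∧ wordLength S (f D) ≤ R := by
      refine ⟨fun D => if hD : ∃ z, z ∈ D ∧ wordLength S z ≤ R then hD.choose else 1,
        fun D hD => ?_⟩
      have hex := hrep D hD
      simp only [dif_pos hex]
      exact hex.choose_spec
    have hinj : Set.InjOn f {D : Set G | ∃ d : ℕ, 1 ≤ d ∧ D = {y | IsConj (x ^ d) y} ∧
        ∃ z ∈ D, wordLength S z ≤ n} := by
      intro D hD D' hD' hDD'
      have h1 : f D ∈ D := (hf D hD).1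
      have h1' : f D' ∈ D' := (hf D' hD').1
      obtain ⟨d, hd, hDeq, -⟩ := hD
      obtain ⟨d', hd', hDeq', -⟩ := hD'
      have hc1 : IsConj (x ^ d) (f D) := hDeq.le h1
      have hc2' : IsConj (x ^ d') (f D') := hDeq'.le h1'
      have hc2 : IsConj (f D) (x ^ d') := by rw [hDD']; exact hc2'.symm
      rw [hDeq, hDeq']
      exact class_eq_of_isConj (hc1.trans hc2)
    have himg : f '' {D : Set G | ∃ d : ℕ, 1 ≤ d ∧ D = {y | IsConj (x ^ d) y} ∧
        ∃ z ∈ D, wordLength S z ≤ n} ⊆ {g : G | wordLength S g ≤ R} := by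
      rintro - ⟨D, hD, rfl⟩
      exact (hf D hD).2
    have hTfin : {D : Set G | ∃ d : ℕ, 1 ≤ d ∧ D = {y | IsConj (x ^ d) y} ∧
        ∃ z ∈ D, wordLength S z ≤ n}.Finite :=
      Set.Finite.of_finite_image (hBfin.subset himg) hinj
    refine ⟨hTfin, ?_⟩
    calc {D : Set G | ∃ d : ℕ, 1 ≤ d ∧ D = {y | IsConj (x ^ d) y} ∧
          ∃ z ∈ D, wordLength S z ≤ n}.ncard
        = (f '' {D : Set G | ∃ d : ℕ, 1 ≤ d ∧ D = {y | IsConj (x ^ d) y} ∧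
          ∃ z ∈ D, wordLength S z ≤ n}).ncard := (Set.ncard_image_of_injOn hinj).symm
      _ ≤ {g : G | wordLength S g ≤ R}.ncard := Set.ncard_le_ncard himg hBfin
      _ ≤ {g : G | wordLength S g ≤ R}.ncard * n := Nat.le_mul_of_pos_right _ (by omega)

end Hyp

lemma ncard_biUnion_le' {ι α : Type*} (F : Finset ι) (f : ι → Set α) :
    (⋃ i ∈ F, f i).ncard ≤ ∑ i ∈ F, (f i).ncard := by
  classical
  induction F using Finset.induction_on with
  | empty => simp
  | insert a s ha ih =>
      rw [Finset.set_biUnion_insert, Finset.sum_insert ha]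
      exact le_trans (Set.ncard_union_le _ _) (by omega)


/-- Let `G` be hyperbolic with finite symmetric generating set `S` and
`δ ≥ 1` a hyperbolicity constant for the Cayley graph. There is a constant `A` such that for
every `n ≥ 1`, the number of distinct conjugacy classes of the form `C^d` — where `d ≥ 1` and
`C` is a conjugacy class with `|C| < 16δ` — containing an element of word length at most `n`
is at most `A·n`. -/
theorem stmt13 {G : Type*} [Group G] (S : Set G) (hSfin : S.Finite)
    (hSsymm : ∀ s ∈ S, s⁻¹ ∈ S) (hSgen : Subgroup.closure S = ⊤)
    (δ : ℝ) (hδ : 1 ≤ δ) (hhyp : FourPointWith S δ) :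
    ∃ A : ℝ, ∀ n : ℕ, 1 ≤ n →
      Set.Finite {D : Set G | ∃ (x : G) (d : ℕ), 1 ≤ d ∧
          (minConjLength S {y | IsConj x y} : ℝ) < 16 * δ ∧
          D = {y | IsConj (x ^ d) y} ∧ ∃ z ∈ D, wordLength S z ≤ n} ∧
      ({D : Set G | ∃ (x : G) (d : ℕ), 1 ≤ d ∧
          (minConjLength S {y | IsConj x y} : ℝ) < 16 * δ ∧
          D = {y | IsConj (x ^ d) y} ∧ ∃ z ∈ D, wordLength S z ≤ n}.ncard : ℝ) ≤ A * n := by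
  classical
  choose C hC using per_x hSgen hSsymm hSfin δ hδ hhyp
  obtain ⟨R16, hR16⟩ : ∃ R : ℕ, R = ⌊16 * δ⌋₊ := ⟨_, rfl⟩
  have hB16 : {g : G | wordLength S g ≤ R16}.Finite := ball_finite hSgen hSsymm hSfin R16
  refine ⟨(∑ x ∈ hB16.toFinset, C x : ℕ), fun n hn => ?_⟩
  have hsub : {D : Set G | ∃ (x : G) (d : ℕ), 1 ≤ d ∧
        (minConjLength S {y | IsConj x y} : ℝ) < 16 * δ ∧
        D = {y | IsConj (x ^ d) y} ∧ ∃ z ∈ D, wordLength S z ≤ n}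
      ⊆ ⋃ x ∈ hB16.toFinset, {D : Set G | ∃ d : ℕ, 1 ≤ d ∧ D = {y | IsConj (x ^ d) y} ∧
        ∃ z ∈ D, wordLength S z ≤ n} := by
    rintro D ⟨x, d, hd, hxlen, hDeq, z, hzD, hzn⟩
    obtain ⟨x', hx'conj, hx'len, -⟩ := exists_min_rep (S := S) x
    have hx'mem : x' ∈ hB16.toFinset := by
      rw [Set.Finite.mem_toFinset]
      have : (wordLength S x' : ℝ) ≤ 16 * δ := by rw [hx'len]; exact le_of_lt hxlen
      rw [hR16]
      exact Nat.le_floor this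
    have hclass : {y : G | IsConj (x ^ d) y} = {y : G | IsConj (x' ^ d) y} :=
      class_eq_of_isConj (isConj_pow hx'conj d)
    refine Set.mem_biUnion hx'mem ⟨d, hd, ?_, z, hzD, hzn⟩
    rw [hDeq, hclass]
  have hfinU : (⋃ x ∈ hB16.toFinset, {D : Set G | ∃ d : ℕ, 1 ≤ d ∧
      D = {y | IsConj (x ^ d) y} ∧ ∃ z ∈ D, wordLength S z ≤ n}).Finite :=
    Set.Finite.biUnion hB16.toFinset.finite_toSet (fun x _ => (hC x n hn).1)
  refine ⟨hfinU.subset hsub, ?_⟩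
  have hcard : {D : Set G | ∃ (x : G) (d : ℕ), 1 ≤ d ∧
        (minConjLength S {y | IsConj x y} : ℝ) < 16 * δ ∧
        D = {y | IsConj (x ^ d) y} ∧ ∃ z ∈ D, wordLength S z ≤ n}.ncard
      ≤ (∑ x ∈ hB16.toFinset, C x) * n := by
    calc _ ≤ (⋃ x ∈ hB16.toFinset, {D : Set G | ∃ d : ℕ, 1 ≤ d ∧
          D = {y | IsConj (x ^ d) y} ∧ ∃ z ∈ D, wordLength S z ≤ n}).ncard :=
        Set.ncard_le_ncard hsub hfinU
      _ ≤ ∑ x ∈ hB16.toFinset, {D : Set G | ∃ d : ℕ, 1 ≤ d ∧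
          D = {y | IsConj (x ^ d) y} ∧ ∃ z ∈ D, wordLength S z ≤ n}.ncard :=
        ncard_biUnion_le' _ _
      _ ≤ ∑ x ∈ hB16.toFinset, C x * n :=
        Finset.sum_le_sum (fun x _ => (hC x n hn).2)
      _ = (∑ x ∈ hB16.toFinset, C x) * n := by rw [Finset.sum_mul]
  calc ({D : Set G | ∃ (x : G) (d : ℕ), 1 ≤ d ∧
        (minConjLength S {y | IsConj x y} : ℝ) < 16 * δ ∧
        D = {y | IsConj (x ^ d) y} ∧ ∃ z ∈ D, wordLength S z ≤ n}.ncard : ℝ)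
      ≤ ((∑ x ∈ hB16.toFinset, C x) * n : ℕ) := by exact_mod_cast hcard
    _ = (∑ x ∈ hB16.toFinset, C x : ℕ) * n := by push_cast; ring
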